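/- Fix $\sigma_w^2 \geq 0$ and $\tau > \sigma_w^2$, $r_{bw}^{\alpha}, \lambda_{bw} > 0$. The function $P_b^{\max} \mapsto e^{\gamma} - \gamma \mathrm{Ei}(\gamma)$ with $\gamma = \frac{(\sigma_w^2 - \tau) r_{bw}^{\alpha}}{\lambda_{bw} P_b^{\max}} < 0$ is strictly increasing in $P_b^{\max} \in (0, \infty)$, tends to $0$ as $P_b^{\max} \to 0^+$, and tends to $1$ as $P_b^{\max} \to \infty$. -/

import Mathlib

open Real Set Filter MeasureTheory intervalIntegral
open scoped Topology

noncomputable def Ei (x : ℝ) : ℝ := ∫ t in Set.Iic x, Real.exp t / t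

lemma Ei_integrableOn {x : ℝ} (hx : x < 0) :
    IntegrableOn (fun t => Real.exp t / t) (Set.Iic x) := by
  refine Integrable.mono' ((integrableOn_exp_Iic x).div_const (-x))
    ((measurable_exp.div measurable_id).aestronglyMeasurable) ?_
  filter_upwards [ae_restrict_mem measurableSet_Iic] with t ht
  have htneg : t < 0 := lt_of_le_of_lt ht hx
  rw [Real.norm_eq_abs, abs_div, abs_of_pos (Real.exp_pos t), abs_of_neg htneg]
  exact div_le_div_of_nonneg_left (Real.exp_pos t).le (neg_pos.2 hx) (neg_le_neg ht)

lemma Ei_neg {x : ℝ} (hx : x < 0) : Ei x < 0 := by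
  have h : 0 < ∫ t in Set.Iic x, -(Real.exp t / t) := by
    rw [setIntegral_pos_iff_support_of_nonneg_ae]
    · refine lt_of_lt_of_le ?_ (measure_mono (s := Set.Iic x) ?_)
      · simp [Real.volume_Iic]
      · intro t ht
        have htneg : t < 0 := lt_of_le_of_lt ht hx
        refine ⟨?_, ht⟩
        simp only [Function.mem_support, neg_ne_zero]
        exact div_ne_zero (Real.exp_ne_zero t) htneg.ne
    · filter_upwards [ae_restrict_mem measurableSet_Iic] with t ht
      have htneg : t < 0 := lt_of_le_of_lt ht hx
      have : Real.exp t / t < 0 := div_neg_of_pos_of_neg (Real.exp_pos t) htneg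
      simp only [Pi.zero_apply]
      linarith
    · exact (Ei_integrableOn hx).neg
  rw [MeasureTheory.integral_neg] at h
  unfold Ei
  linarith

lemma Ei_hasDerivAt {x : ℝ} (hx : x < 0) : HasDerivAt Ei (Real.exp x / x) x := by
  have key : ∀ y : ℝ, y < 0 →
      Ei y = Ei (2 * x) + ∫ t in (2 * x)..y, Real.exp t / t := by
    intro y hy
    have := intervalIntegral.integral_Iic_sub_Iic (Ei_integrableOn (by linarith : 2 * x < 0))
      (Ei_integrableOn hy)
    unfold Ei
    linarith [this]
  have hint : IntervalIntegrable (fun t => Real.exp t / t) volume (2 * x) x := by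
    rw [intervalIntegrable_iff]
    exact (Ei_integrableOn hx).mono_set (fun t ht => le_trans ht.2 (by
      rw [max_eq_right (by linarith : 2 * x ≤ x)]))
  have hF : HasDerivAt (fun u => ∫ t in (2 * x)..u, Real.exp t / t) (Real.exp x / x) x := by
    refine intervalIntegral.integral_hasDerivAt_right hint
      ((measurable_exp.div measurable_id).stronglyMeasurable.stronglyMeasurableAtFilter) ?_
    exact (Real.continuous_exp.continuousAt).div continuousAt_id hx.ne
  have hF' : HasDerivAt (fun u => Ei (2 * x) + ∫ t in (2 * x)..u, Real.exp t / t)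
      (Real.exp x / x) x := hF.const_add _
  refine hF'.congr_of_eventuallyEq ?_
  filter_upwards [Iio_mem_nhds hx] with y hy
  exact key y hy

lemma g_hasDerivAt {x : ℝ} (hx : x < 0) :
    HasDerivAt (fun y => Real.exp y - y * Ei y) (-Ei x) x := by
  have h1 := Real.hasDerivAt_exp x
  have h2 := (hasDerivAt_id x).mul (Ei_hasDerivAt hx)
  have h3 := h1.sub h2
  refine h3.congr_deriv ?_
  have : x * (Real.exp x / x) = Real.exp x := mul_div_cancel₀ _ hx.ne
  simp only [id_eq, one_mul]
  rw [this]
  ring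

lemma g_strictMonoOn : StrictMonoOn (fun y => Real.exp y - y * Ei y) (Set.Iio (0:ℝ)) := by
  refine strictMonoOn_of_deriv_pos (convex_Iio 0)
    (fun y hy => ((g_hasDerivAt hy).continuousAt.continuousWithinAt)) ?_
  intro y hy
  rw [interior_Iio] at hy
  rw [(g_hasDerivAt hy).deriv]
  linarith [Ei_neg hy]

lemma abs_mul_Ei_le {x : ℝ} (hx : x < 0) : ‖x * Ei x‖ ≤ Real.exp x := by
  have : x * Ei x = ∫ t in Set.Iic x, x * (Real.exp t / t) := by
    rw [MeasureTheory.integral_const_mul]; rfl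
  rw [this, ← integral_exp_Iic x]
  refine MeasureTheory.norm_integral_le_of_norm_le (integrableOn_exp_Iic x) ?_
  filter_upwards [ae_restrict_mem measurableSet_Iic] with t ht
  have htneg : t < 0 := lt_of_le_of_lt ht hx
  have ht' : t ≤ x := ht
  rw [Real.norm_eq_abs, abs_mul, abs_div, abs_of_pos (Real.exp_pos t), abs_of_neg htneg,
    abs_of_neg hx]
  rw [mul_div_assoc', mul_comm]
  calc Real.exp t * -x / -t ≤ Real.exp t * -t / -t := by
        apply div_le_div_of_nonneg_right ?_ (by linarith)
        exact mul_le_mul_of_nonneg_left (by linarith) (Real.exp_pos t).le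
    _ = Real.exp t := by
        rw [mul_div_assoc, div_self (by linarith : -t ≠ 0), mul_one]

lemma g_tendsto_atBot :
    Tendsto (fun y => Real.exp y - y * Ei y) atBot (𝓝 0) := by
  have h1 : Tendsto (fun y : ℝ => Real.exp y) atBot (𝓝 0) := Real.tendsto_exp_atBot
  have h2 : Tendsto (fun y : ℝ => y * Ei y) atBot (𝓝 0) := by
    refine squeeze_zero_norm' ?_ h1
    filter_upwards [Iio_mem_atBot 0] with y hy
    exact abs_mul_Ei_le hy
  simpa using h1.sub h2

lemma mul_Ei_tendsto_zero_left :
    Tendsto (fun x => x * Ei x) (𝓝[<] (0:ℝ)) (𝓝 0) := by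
  have hbound : ∀ x : ℝ, -1 < x → x < 0 →
      ‖x * Ei x‖ ≤ |x| * |Ei (-1)| + Real.log x * x := by
    intro x hx1 hx0
    have hEi : Ei x = Ei (-1) + ∫ t in (-1:ℝ)..x, Real.exp t / t := by
      have := intervalIntegral.integral_Iic_sub_Iic
        (Ei_integrableOn (by norm_num : (-1:ℝ) < 0)) (Ei_integrableOn hx0)
      unfold Ei; linarith [this]
    have hIcont : ∀ t ∈ Set.uIcc (-1:ℝ) x, t < 0 := by
      intro t ht
      rw [Set.uIcc_of_le (by linarith : (-1:ℝ) ≤ x)] at ht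
      exact lt_of_le_of_lt ht.2 hx0
    have hint1 : IntervalIntegrable (fun t => Real.exp t / t) volume (-1) x := by
      apply ContinuousOn.intervalIntegrable
      exact ContinuousOn.div (Real.continuous_exp.continuousOn) continuousOn_id
        (fun t ht => (hIcont t ht).ne)
    have hint2 : IntervalIntegrable (fun t => -(t⁻¹)) volume (-1) x := by
      apply ContinuousOn.intervalIntegrable
      exact (continuousOn_id.inv₀ (fun t ht => (hIcont t ht).ne)).neg
    have hIbound : |∫ t in (-1:ℝ)..x, Real.exp t / t| ≤ -(Real.log (-x)) := by
      have h1 : |∫ t in (-1:ℝ)..x, Real.exp t / t| ≤ ∫ t in (-1:ℝ)..x, |Real.exp t / t| :=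
        intervalIntegral.abs_integral_le_integral_abs (by linarith)
      have h2 : (∫ t in (-1:ℝ)..x, |Real.exp t / t|) ≤ ∫ t in (-1:ℝ)..x, -(t⁻¹) := by
        refine intervalIntegral.integral_mono_on (by linarith) hint1.abs hint2 ?_
        intro t ht
        have htneg : t < 0 := lt_of_le_of_lt ht.2 hx0
        rw [abs_div, abs_of_pos (Real.exp_pos t), abs_of_neg htneg]
        have hexp : Real.exp t ≤ 1 := by
          rw [← Real.exp_zero]; exact Real.exp_le_exp.2 (by linarith)
        calc Real.exp t / -t ≤ 1 / -t := by
              apply div_le_div_of_nonneg_right hexp (by linarith)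
          _ = -(t⁻¹) := by rw [one_div, inv_neg]
      have h3 : (∫ t in (-1:ℝ)..x, -(t⁻¹)) = -(Real.log (-x)) := by
        rw [intervalIntegral.integral_neg, _root_.integral_inv]
        · rw [div_neg, div_one, Real.log_neg_eq_log]
        · intro h
          rw [Set.uIcc_of_le (by linarith : (-1:ℝ) ≤ x)] at h
          exact absurd h.2 (by linarith)
      linarith
    calc ‖x * Ei x‖ = |x * Ei (-1) + x * ∫ t in (-1:ℝ)..x, Real.exp t / t| := by
          rw [hEi, mul_add, Real.norm_eq_abs]
      _ ≤ |x * Ei (-1)| + |x * ∫ t in (-1:ℝ)..x, Real.exp t / t| := abs_add_le _ _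
      _ ≤ |x| * |Ei (-1)| + Real.log x * x := by
          rw [abs_mul, abs_mul]
          refine add_le_add le_rfl ?_
          rw [abs_of_neg hx0]
          calc -x * |∫ t in (-1:ℝ)..x, Real.exp t / t| ≤ -x * -(Real.log (-x)) := by
                exact mul_le_mul_of_nonneg_left hIbound (by linarith)
            _ = Real.log x * x := by rw [Real.log_neg_eq_log]; ring
  have hlim : Tendsto (fun x : ℝ => |x| * |Ei (-1)| + Real.log x * x) (𝓝[<] 0) (𝓝 0) := by
    have h1 : Tendsto (fun x : ℝ => |x| * |Ei (-1)|) (𝓝[<] 0) (𝓝 0) := by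
      have : Tendsto (fun x : ℝ => |x| * |Ei (-1)|) (𝓝 0) (𝓝 (|(0:ℝ)| * |Ei (-1)|)) :=
        (continuous_abs.mul continuous_const).tendsto 0
      simpa using this.mono_left nhdsWithin_le_nhds
    simpa using h1.add tendsto_log_mul_self_nhdsLT_zero
  refine squeeze_zero_norm' ?_ hlim
  filter_upwards [Ioo_mem_nhdsLT_of_mem (by norm_num : (0:ℝ) ∈ Set.Ioc (-1) 0)] with x hx
  exact hbound x hx.1 hx.2

lemma g_tendsto_zero_left :
    Tendsto (fun y => Real.exp y - y * Ei y) (𝓝[<] (0:ℝ)) (𝓝 1) := by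
  have h1 : Tendsto (fun y : ℝ => Real.exp y) (𝓝[<] 0) (𝓝 1) := by
    simpa using (Real.continuous_exp.tendsto 0).mono_left (nhdsWithin_le_nhds (s := Set.Iio 0))
  simpa using h1.sub mul_Ei_tendsto_zero_left

/-- The false alarm probability `e^γ - γ Ei(γ)` with
`γ = (sw2 - τ) rbw / (lbw Pbmax) < 0` is strictly increasing in `Pbmax ∈ (0,∞)`,
tends to `0` as `Pbmax → 0⁺`, and tends to `1` as `Pbmax → ∞`. -/
theorem stmt6 (rbw lbw sw2 τ : ℝ) (hrbw : 0 < rbw) (hlbw : 0 < lbw)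
    (hsw2 : 0 ≤ sw2) (hτ : sw2 < τ) :
    StrictMonoOn
      (fun P : ℝ => Real.exp ((sw2 - τ) * rbw / (lbw * P)) -
        ((sw2 - τ) * rbw / (lbw * P)) * Ei ((sw2 - τ) * rbw / (lbw * P))) (Set.Ioi 0) ∧
    Filter.Tendsto
      (fun P : ℝ => Real.exp ((sw2 - τ) * rbw / (lbw * P)) -
        ((sw2 - τ) * rbw / (lbw * P)) * Ei ((sw2 - τ) * rbw / (lbw * P)))
      (nhdsWithin 0 (Set.Ioi 0)) (nhds 0) ∧
    Filter.Tendsto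
      (fun P : ℝ => Real.exp ((sw2 - τ) * rbw / (lbw * P)) -
        ((sw2 - τ) * rbw / (lbw * P)) * Ei ((sw2 - τ) * rbw / (lbw * P)))
      Filter.atTop (nhds 1) := by
  set k : ℝ := (sw2 - τ) * rbw with hk_def
  have hk : k < 0 := mul_neg_of_neg_of_pos (by linarith) hrbw
  have hγneg : ∀ P : ℝ, 0 < P → k / (lbw * P) < 0 := fun P hP =>
    div_neg_of_neg_of_pos hk (mul_pos hlbw hP)
  refine ⟨?_, ?_, ?_⟩
  · intro a ha b hb hab
    have ha' : (0:ℝ) < a := ha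
    have hb' : (0:ℝ) < b := hb
    have hmono : k / (lbw * a) < k / (lbw * b) := by
      rw [div_eq_mul_inv, div_eq_mul_inv]
      refine mul_lt_mul_of_neg_left ?_ hk
      exact inv_strictAnti₀ (mul_pos hlbw ha') (mul_lt_mul_of_pos_left hab hlbw)
    exact g_strictMonoOn (hγneg a ha') (hγneg b hb') hmono
  · have hγ : Tendsto (fun P : ℝ => k / (lbw * P)) (𝓝[>] 0) atBot := by
      simp only [div_eq_mul_inv]
      rw [tendsto_const_mul_atBot_of_neg hk]
      have hm : Tendsto (fun P : ℝ => lbw * P) (𝓝[>] 0) (𝓝[>] 0) := by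
        refine tendsto_nhdsWithin_of_tendsto_nhds_of_eventually_within _ ?_ ?_
        · have : Tendsto (fun P : ℝ => lbw * P) (𝓝 0) (𝓝 (lbw * 0)) :=
            (continuous_const.mul continuous_id).tendsto 0
          simpa using this.mono_left (nhdsWithin_le_nhds (s := Set.Ioi 0))
        · filter_upwards [self_mem_nhdsWithin] with P hP
          exact mul_pos hlbw hP
      exact tendsto_inv_nhdsGT_zero.comp hm
    exact g_tendsto_atBot.comp hγ
  · have hγ : Tendsto (fun P : ℝ => k / (lbw * P)) atTop (𝓝[<] 0) := by
      refine tendsto_nhdsWithin_of_tendsto_nhds_of_eventually_within _ ?_ ?_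
      · have hm : Tendsto (fun P : ℝ => (lbw * P)⁻¹) atTop (𝓝 0) :=
          tendsto_inv_atTop_zero.comp (tendsto_id.const_mul_atTop hlbw)
        simpa [div_eq_mul_inv] using hm.const_mul k
      · filter_upwards [eventually_gt_atTop 0] with P hP
        exact hγneg P hP
    exact g_tendsto_zero_left.comp hγ
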